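/- arXiv:2512.18862 — 3 statements merged into one kernel-verified Lean document; each statement's English description precedes it below -/
import Mathlib

section
/- The map p(x) = 5x + 2 is the unique affine transformation x ↦ ax + b on Z/12Z (with a a unit) that maps K = {0, 3, 4, 7, 8, 9} onto its complement D = {1, 2, 5, 6, 10, 11}. -/
lemma polarity_key : ∀ a b : ZMod 12,
    (∀ x : ZMod 12, (∃ y : ZMod 12, (y = 0 ∨ y = 3 ∨ y = 4 ∨ y = 7 ∨ y = 8 ∨ y = 9) ∧ a * y + b = x) ↔
      ¬(x = 0 ∨ x = 3 ∨ x = 4 ∨ x = 7 ∨ x = 8 ∨ x = 9)) → a = 5 ∧ b = 2 := by decide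

lemma polarity_ex : ∀ x : ZMod 12,
    (∃ y : ZMod 12, (y = 0 ∨ y = 3 ∨ y = 4 ∨ y = 7 ∨ y = 8 ∨ y = 9) ∧ 5 * y + 2 = x) ↔
      ¬(x = 0 ∨ x = 3 ∨ x = 4 ∨ x = 7 ∨ x = 8 ∨ x = 9) := by decide

/-- p(x) = 5x + 2 is the unique affine transformation (with unit linear part)
mapping K = {0,3,4,7,8,9} onto its complement D = {1,2,5,6,10,11}. -/
theorem polarity_unique :
    ((fun x : ZMod 12 => 5 * x + 2) '' ({0, 3, 4, 7, 8, 9} : Set (ZMod 12))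
      = ({0, 3, 4, 7, 8, 9} : Set (ZMod 12))ᶜ) ∧
    (∀ a b : ZMod 12, IsUnit a →
      (fun x : ZMod 12 => a * x + b) '' ({0, 3, 4, 7, 8, 9} : Set (ZMod 12))
        = ({0, 3, 4, 7, 8, 9} : Set (ZMod 12))ᶜ → a = 5 ∧ b = 2) := by
  constructor
  · ext x
    simpa [Set.mem_image, Set.mem_insert_iff, Set.mem_singleton_iff] using polarity_ex x
  · intro a b _ h
    apply polarity_key a b
    intro x
    have := Set.ext_iff.mp h x
    simpa [Set.mem_image, Set.mem_insert_iff, Set.mem_singleton_iff] using this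
end

section
/- The map g(x + εy) = 5(x + εy) + ε·2 on the dual numbers Z/12Z[ε] maps K[ε] = {x + εk : x ∈ Z/12Z, k ∈ K} bijectively onto D[ε] = {x + εd : x ∈ Z/12Z, d ∈ D}, and vice versa. -/
open DualNumber

private lemma fst5 : ((5 : DualNumber (ZMod 12)).fst) = 5 := by
  rw [show (5 : DualNumber (ZMod 12)) = ((5:ℕ):DualNumber (ZMod 12)) by norm_cast,
    TrivSqZeroExt.fst_natCast]; norm_cast
private lemma snd5 : ((5 : DualNumber (ZMod 12)).snd) = 0 := by
  rw [show (5 : DualNumber (ZMod 12)) = ((5:ℕ):DualNumber (ZMod 12)) by norm_cast,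
    TrivSqZeroExt.snd_natCast]
private lemma fst2 : ((2 : DualNumber (ZMod 12)).fst) = 2 := by
  rw [show (2 : DualNumber (ZMod 12)) = ((2:ℕ):DualNumber (ZMod 12)) by norm_cast,
    TrivSqZeroExt.fst_natCast]; norm_cast
private lemma snd2 : ((2 : DualNumber (ZMod 12)).snd) = 0 := by
  rw [show (2 : DualNumber (ZMod 12)) = ((2:ℕ):DualNumber (ZMod 12)) by norm_cast,
    TrivSqZeroExt.snd_natCast]

private lemma snd_g (z : DualNumber (ZMod 12)) :
    (5 * z + 2 * ε).snd = 5 * z.snd + 2 := by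
  rw [TrivSqZeroExt.snd_add, TrivSqZeroExt.snd_mul, TrivSqZeroExt.snd_mul]
  simp only [DualNumber.eps, TrivSqZeroExt.snd_inr, TrivSqZeroExt.fst_inr,
    fst5, snd5, fst2, snd2, smul_zero, smul_eq_mul, add_zero, mul_one]

private lemma g_invol (z : DualNumber (ZMod 12)) :
    5 * (5 * z + 2 * ε) + 2 * ε = z := by
  ext
  · rw [TrivSqZeroExt.fst_add, TrivSqZeroExt.fst_mul, TrivSqZeroExt.fst_add,
      TrivSqZeroExt.fst_mul, TrivSqZeroExt.fst_mul]
    simp only [DualNumber.eps, TrivSqZeroExt.fst_inr, fst5, fst2, mul_zero, add_zero]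
    rw [show (5:ZMod 12)*(5*z.fst) = 25 * z.fst by ring,
      show (25 : ZMod 12) = 1 by decide]
    ring
  · rw [TrivSqZeroExt.snd_add, TrivSqZeroExt.snd_mul, snd_g]
    simp only [TrivSqZeroExt.snd_mul, DualNumber.eps, TrivSqZeroExt.snd_inr,
      TrivSqZeroExt.fst_inr, fst5, snd5, fst2, snd2, smul_zero, smul_eq_mul,
      add_zero, mul_one]
    rw [show (5:ZMod 12)*(5*z.snd + 2) + 2 = 25 * z.snd + 12 by ring,
      show (25 : ZMod 12) = 1 by decide, show (12:ZMod 12) = 0 by decide]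
    ring

private lemma mapsKD : ∀ k ∈ ({0, 3, 4, 7, 8, 9} : Set (ZMod 12)),
    5 * k + 2 ∈ ({1, 2, 5, 6, 10, 11} : Set (ZMod 12)) := by decide

private lemma mapsDK : ∀ k ∈ ({1, 2, 5, 6, 10, 11} : Set (ZMod 12)),
    5 * k + 2 ∈ ({0, 3, 4, 7, 8, 9} : Set (ZMod 12)) := by decide

/-- The induced polarity z ↦ 5z + 2ε on ℤ/12ℤ[ε] exchanges
K[ε] = {x + εk : k ∈ K} and D[ε] = {x + εd : d ∈ D} bijectively. -/
theorem induced_polarity_bijOn :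
    Set.BijOn (fun z : DualNumber (ZMod 12) => 5 * z + 2 * ε)
      {z : DualNumber (ZMod 12) | z.snd ∈ ({0, 3, 4, 7, 8, 9} : Set (ZMod 12))}
      {z : DualNumber (ZMod 12) | z.snd ∈ ({1, 2, 5, 6, 10, 11} : Set (ZMod 12))} ∧
    Set.BijOn (fun z : DualNumber (ZMod 12) => 5 * z + 2 * ε)
      {z : DualNumber (ZMod 12) | z.snd ∈ ({1, 2, 5, 6, 10, 11} : Set (ZMod 12))}
      {z : DualNumber (ZMod 12) | z.snd ∈ ({0, 3, 4, 7, 8, 9} : Set (ZMod 12))} := by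
  have hKD : Set.MapsTo (fun z : DualNumber (ZMod 12) => 5 * z + 2 * ε)
      {z : DualNumber (ZMod 12) | z.snd ∈ ({0, 3, 4, 7, 8, 9} : Set (ZMod 12))}
      {z : DualNumber (ZMod 12) | z.snd ∈ ({1, 2, 5, 6, 10, 11} : Set (ZMod 12))} := by
    intro z hz
    simp only [Set.mem_setOf_eq, snd_g] at *
    exact mapsKD _ hz
  have hDK : Set.MapsTo (fun z : DualNumber (ZMod 12) => 5 * z + 2 * ε)
      {z : DualNumber (ZMod 12) | z.snd ∈ ({1, 2, 5, 6, 10, 11} : Set (ZMod 12))}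
      {z : DualNumber (ZMod 12) | z.snd ∈ ({0, 3, 4, 7, 8, 9} : Set (ZMod 12))} := by
    intro z hz
    simp only [Set.mem_setOf_eq, snd_g] at *
    exact mapsDK _ hz
  have hinv : ∀ S : Set (DualNumber (ZMod 12)),
      Set.LeftInvOn (fun z : DualNumber (ZMod 12) => 5 * z + 2 * ε)
      (fun z : DualNumber (ZMod 12) => 5 * z + 2 * ε) S := fun _ z _ => g_invol z
  exact ⟨Set.InvOn.bijOn ⟨hinv _, hinv _⟩ hKD hDK,
         Set.InvOn.bijOn ⟨hinv _, hinv _⟩ hDK hKD⟩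
end

section
/- For every consonance ξ = x + εk with k ∈ K, the number of admissible successors under any counterpoint symmetry is at least 42 (Little Theorem of Counterpoint), where admissible successors are the elements of g(K[ε]) ∩ K[ε] for a counterpoint symmetry g of ξ. -/
open DualNumber

/-- Consonances in ℤ/12ℤ. -/
def Kcons : Set (ZMod 12) := {0, 3, 4, 7, 8, 9}

/-- Dissonances in ℤ/12ℤ. -/
def Dcons : Set (ZMod 12) := {1, 2, 5, 6, 10, 11}

/-- K[ε]: counterpoint intervals with consonant ε-part. -/
def Keps : Set (DualNumber (ZMod 12)) := {z | z.snd ∈ Kcons}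

/-- D[ε]: counterpoint intervals with dissonant ε-part. -/
def Deps : Set (DualNumber (ZMod 12)) := {z | z.snd ∈ Dcons}

/-- The induced polarity z ↦ 5z + 2ε. -/
def polEps (z : DualNumber (ZMod 12)) : DualNumber (ZMod 12) := 5 * z + 2 * ε

/-- Membership in the group H of symmetries z ↦ uz + εw. -/
def memH (g : DualNumber (ZMod 12) → DualNumber (ZMod 12)) : Prop :=
  ∃ (u : (DualNumber (ZMod 12))ˣ) (w : ZMod 12),
    g = fun z => (u : DualNumber (ZMod 12)) * z + w • ε

/-- Conditions (1) and (2) for a counterpoint symmetry of ξ. -/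
def PreCtpSym (ξ : DualNumber (ZMod 12))
    (g : DualNumber (ZMod 12) → DualNumber (ZMod 12)) : Prop :=
  memH g ∧ ξ ∈ g '' Deps ∧
    polEps '' (g '' Keps) = g '' Deps ∧ polEps '' (g '' Deps) = g '' Keps

/-- A counterpoint symmetry for ξ: satisfies (1), (2) and maximizes |g(K[ε]) ∩ K[ε]|. -/
def IsCtpSym (ξ : DualNumber (ZMod 12))
    (g : DualNumber (ZMod 12) → DualNumber (ZMod 12)) : Prop :=
  PreCtpSym ξ g ∧
    ∀ g', PreCtpSym ξ g' →
      Nat.card ↥(g' '' Keps ∩ Keps) ≤ Nat.card ↥(g '' Keps ∩ Keps)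

/- ### Auxiliary instances -/

set_option maxRecDepth 40000

instance : Fintype (DualNumber (ZMod 12)) :=
  inferInstanceAs (Fintype (ZMod 12 × ZMod 12))
instance : DecidableEq (DualNumber (ZMod 12)) :=
  inferInstanceAs (DecidableEq (ZMod 12 × ZMod 12))

instance : DecidablePred (· ∈ Kcons) := fun z =>
  decidable_of_iff (z = 0 ∨ z = 3 ∨ z = 4 ∨ z = 7 ∨ z = 8 ∨ z = 9) (by simp [Kcons])
instance : DecidablePred (· ∈ Dcons) := fun z =>
  decidable_of_iff (z = 1 ∨ z = 2 ∨ z = 5 ∨ z = 6 ∨ z = 10 ∨ z = 11) (by simp [Dcons])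
instance : DecidablePred (· ∈ Keps) := fun z =>
  decidable_of_iff (z.snd ∈ Kcons) Iff.rfl
instance : DecidablePred (· ∈ Deps) := fun z =>
  decidable_of_iff (z.snd ∈ Dcons) Iff.rfl

instance decMemImage (f : DualNumber (ZMod 12) → DualNumber (ZMod 12))
    (s : Set (DualNumber (ZMod 12))) [DecidablePred (· ∈ s)] :
    DecidablePred (· ∈ f '' s) := fun z =>
  decidable_of_iff (∃ x, x ∈ s ∧ f x = z) (by simp [Set.mem_image])

/- ### Concrete symmetries -/

def U16 : (DualNumber (ZMod 12))ˣ :=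
  ⟨((1 : ZMod 12), (6 : ZMod 12)), ((1 : ZMod 12), (6 : ZMod 12)), by decide, by decide⟩
def U14 : (DualNumber (ZMod 12))ˣ :=
  ⟨((1 : ZMod 12), (4 : ZMod 12)), ((1 : ZMod 12), (8 : ZMod 12)), by decide, by decide⟩
def U54 : (DualNumber (ZMod 12))ˣ :=
  ⟨((5 : ZMod 12), (4 : ZMod 12)), ((5 : ZMod 12), (8 : ZMod 12)), by decide, by decide⟩
def U18 : (DualNumber (ZMod 12))ˣ :=
  ⟨((1 : ZMod 12), (8 : ZMod 12)), ((1 : ZMod 12), (4 : ZMod 12)), by decide, by decide⟩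
def U70 : (DualNumber (ZMod 12))ˣ :=
  ⟨((7 : ZMod 12), (0 : ZMod 12)), ((7 : ZMod 12), (0 : ZMod 12)), by decide, by decide⟩

def gsym (u : (DualNumber (ZMod 12))ˣ) (w : ZMod 12) :
    DualNumber (ZMod 12) → DualNumber (ZMod 12) :=
  fun z => (u : DualNumber (ZMod 12)) * z + w • ε

lemma gsym_memH (u : (DualNumber (ZMod 12))ˣ) (w : ZMod 12) : memH (gsym u w) :=
  ⟨u, w, rfl⟩

/-- A computationally cheap form of the symmetry `z ↦ (a + bε)z + wε`. -/
def gf (a b w : ZMod 12) : DualNumber (ZMod 12) → DualNumber (ZMod 12) :=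
  fun z => (a * z.fst, b * z.fst + a * z.snd + w)

/-- A computationally cheap form of the polarity. -/
def polf : DualNumber (ZMod 12) → DualNumber (ZMod 12) :=
  fun z => (5 * z.fst, 5 * z.snd + 2)

lemma polEps_eq : polEps = polf := funext fun z => by
  revert z; decide

lemma geq1 : gsym U16 0 = gf 1 6 0 := funext fun z => by revert z; decide
lemma geq2 : gsym U16 6 = gf 1 6 6 := funext fun z => by revert z; decide
lemma geq3 : gsym U14 0 = gf 1 4 0 := funext fun z => by revert z; decide
lemma geq4 : gsym U54 8 = gf 5 4 8 := funext fun z => by revert z; decide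
lemma geq5 : gsym U18 0 = gf 1 8 0 := funext fun z => by revert z; decide
lemma geq6 : gsym U70 0 = gf 7 0 0 := funext fun z => by revert z; decide

/- ### Verification of conditions for the cheap forms -/

instance decMemPreimage (f : DualNumber (ZMod 12) → DualNumber (ZMod 12))
    (s : Set (DualNumber (ZMod 12))) [DecidablePred (· ∈ s)] :
    DecidablePred (· ∈ f ⁻¹' s) := fun z =>
  decidable_of_iff (f z ∈ s) Iff.rfl

/-- Rewrite an image under `gf` as a preimage under the inverse map. -/
lemma img (a b w a' b' w' : ZMod 12)
    (h1 : ∀ z, gf a' b' w' (gf a b w z) = z)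
    (h2 : ∀ z, gf a b w (gf a' b' w' z) = z)
    (s : Set (DualNumber (ZMod 12))) :
    gf a b w '' s = gf a' b' w' ⁻¹' s :=
  congrFun (Set.image_eq_preimage_of_inverse h1 h2) s

lemma polf_invol : ∀ z, polf (polf z) = z := by decide

lemma polf_img (s : Set (DualNumber (ZMod 12))) : polf '' s = polf ⁻¹' s :=
  congrFun (Set.image_eq_preimage_of_inverse polf_invol polf_invol) s

lemma inv1 : ∀ z, gf 1 6 0 (gf 1 6 0 z) = z := by decide
lemma inv2 : ∀ z, gf 1 6 6 (gf 1 6 6 z) = z := by decide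
lemma inv3a : ∀ z, gf 1 8 0 (gf 1 4 0 z) = z := by decide
lemma inv3b : ∀ z, gf 1 4 0 (gf 1 8 0 z) = z := by decide
lemma inv4a : ∀ z, gf 5 8 8 (gf 5 4 8 z) = z := by decide
lemma inv4b : ∀ z, gf 5 4 8 (gf 5 8 8 z) = z := by decide
lemma inv6 : ∀ z, gf 7 0 0 (gf 7 0 0 z) = z := by decide

lemma img1 (s) : gf 1 6 0 '' s = gf 1 6 0 ⁻¹' s := img _ _ _ _ _ _ inv1 inv1 s
lemma img2 (s) : gf 1 6 6 '' s = gf 1 6 6 ⁻¹' s := img _ _ _ _ _ _ inv2 inv2 s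
lemma img3 (s) : gf 1 4 0 '' s = gf 1 8 0 ⁻¹' s := img _ _ _ _ _ _ inv3a inv3b s
lemma img4 (s) : gf 5 4 8 '' s = gf 5 8 8 ⁻¹' s := img _ _ _ _ _ _ inv4a inv4b s
lemma img5 (s) : gf 1 8 0 '' s = gf 1 4 0 ⁻¹' s := img _ _ _ _ _ _ inv3b inv3a s
lemma img6 (s) : gf 7 0 0 '' s = gf 7 0 0 ⁻¹' s := img _ _ _ _ _ _ inv6 inv6 s

lemma pol1K : polEps '' (gf 1 6 0 '' Keps) = gf 1 6 0 '' Deps := by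
  rw [polEps_eq, img1, img1, polf_img]; exact Set.ext (by decide)
lemma pol1D : polEps '' (gf 1 6 0 '' Deps) = gf 1 6 0 '' Keps := by
  rw [polEps_eq, img1, img1, polf_img]; exact Set.ext (by decide)
lemma pol2K : polEps '' (gf 1 6 6 '' Keps) = gf 1 6 6 '' Deps := by
  rw [polEps_eq, img2, img2, polf_img]; exact Set.ext (by decide)
lemma pol2D : polEps '' (gf 1 6 6 '' Deps) = gf 1 6 6 '' Keps := by
  rw [polEps_eq, img2, img2, polf_img]; exact Set.ext (by decide)
lemma pol3K : polEps '' (gf 1 4 0 '' Keps) = gf 1 4 0 '' Deps := by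
  rw [polEps_eq, img3, img3, polf_img]; exact Set.ext (by decide)
lemma pol3D : polEps '' (gf 1 4 0 '' Deps) = gf 1 4 0 '' Keps := by
  rw [polEps_eq, img3, img3, polf_img]; exact Set.ext (by decide)
lemma pol4K : polEps '' (gf 5 4 8 '' Keps) = gf 5 4 8 '' Deps := by
  rw [polEps_eq, img4, img4, polf_img]; exact Set.ext (by decide)
lemma pol4D : polEps '' (gf 5 4 8 '' Deps) = gf 5 4 8 '' Keps := by
  rw [polEps_eq, img4, img4, polf_img]; exact Set.ext (by decide)
lemma pol5K : polEps '' (gf 1 8 0 '' Keps) = gf 1 8 0 '' Deps := by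
  rw [polEps_eq, img5, img5, polf_img]; exact Set.ext (by decide)
lemma pol5D : polEps '' (gf 1 8 0 '' Deps) = gf 1 8 0 '' Keps := by
  rw [polEps_eq, img5, img5, polf_img]; exact Set.ext (by decide)
lemma pol6K : polEps '' (gf 7 0 0 '' Keps) = gf 7 0 0 '' Deps := by
  rw [polEps_eq, img6, img6, polf_img]; exact Set.ext (by decide)
lemma pol6D : polEps '' (gf 7 0 0 '' Deps) = gf 7 0 0 '' Keps := by
  rw [polEps_eq, img6, img6, polf_img]; exact Set.ext (by decide)

lemma card1 : 42 ≤ Nat.card ↥(gf 1 6 0 '' Keps ∩ Keps) := by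
  rw [img1, Nat.card_eq_fintype_card]; decide
lemma card2 : 42 ≤ Nat.card ↥(gf 1 6 6 '' Keps ∩ Keps) := by
  rw [img2, Nat.card_eq_fintype_card]; decide
lemma card3 : 42 ≤ Nat.card ↥(gf 1 4 0 '' Keps ∩ Keps) := by
  rw [img3, Nat.card_eq_fintype_card]; decide
lemma card4 : 42 ≤ Nat.card ↥(gf 5 4 8 '' Keps ∩ Keps) := by
  rw [img4, Nat.card_eq_fintype_card]; decide
lemma card5 : 42 ≤ Nat.card ↥(gf 1 8 0 '' Keps ∩ Keps) := by
  rw [img5, Nat.card_eq_fintype_card]; decide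
lemma card6 : 42 ≤ Nat.card ↥(gf 7 0 0 '' Keps ∩ Keps) := by
  rw [img6, Nat.card_eq_fintype_card]; decide

lemma cover : ∀ ξ ∈ Keps, ξ ∈ gf 1 6 0 '' Deps ∨ ξ ∈ gf 1 6 6 '' Deps ∨
    ξ ∈ gf 1 4 0 '' Deps ∨ ξ ∈ gf 5 4 8 '' Deps ∨ ξ ∈ gf 1 8 0 '' Deps ∨
    ξ ∈ gf 7 0 0 '' Deps := by
  simp only [img1, img2, img3, img4, img5, img6]
  decide

/- ### The key existence lemma -/

lemma key : ∀ ξ ∈ Keps, ∃ g', PreCtpSym ξ g' ∧ 42 ≤ Nat.card ↥(g' '' Keps ∩ Keps) := by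
  intro ξ hξ
  rcases cover ξ hξ with h | h | h | h | h | h
  · exact ⟨gsym U16 0, ⟨gsym_memH _ _, by rw [geq1]; exact ⟨h, pol1K, pol1D⟩⟩,
      by rw [geq1]; exact card1⟩
  · exact ⟨gsym U16 6, ⟨gsym_memH _ _, by rw [geq2]; exact ⟨h, pol2K, pol2D⟩⟩,
      by rw [geq2]; exact card2⟩
  · exact ⟨gsym U14 0, ⟨gsym_memH _ _, by rw [geq3]; exact ⟨h, pol3K, pol3D⟩⟩,
      by rw [geq3]; exact card3⟩
  · exact ⟨gsym U54 8, ⟨gsym_memH _ _, by rw [geq4]; exact ⟨h, pol4K, pol4D⟩⟩,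
      by rw [geq4]; exact card4⟩
  · exact ⟨gsym U18 0, ⟨gsym_memH _ _, by rw [geq5]; exact ⟨h, pol5K, pol5D⟩⟩,
      by rw [geq5]; exact card5⟩
  · exact ⟨gsym U70 0, ⟨gsym_memH _ _, by rw [geq6]; exact ⟨h, pol6K, pol6D⟩⟩,
      by rw [geq6]; exact card6⟩

/-- Little Theorem of Counterpoint: every consonance admits at least 42
admissible successors under any of its counterpoint symmetries. -/
theorem little_theorem_of_counterpoint :
    ∀ ξ ∈ Keps, ∀ g, IsCtpSym ξ g → 42 ≤ Nat.card ↥(g '' Keps ∩ Keps) := by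
  intro ξ hξ g hg
  obtain ⟨g', hpre, hcard⟩ := key ξ hξ
  exact hcard.trans (hg.2 g' hpre)
end
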